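/- Let K ⊆ ℝⁿ be a closed convex set that is invariant under coordinate permutations and under coordinate-wise sign flips (for every ε ∈ {−1,1}ⁿ and x ∈ K, the vector (ε₁x₁,…,εₙxₙ) ∈ K). Let x* ∈ K have at most s nonzero entries. Let z ∈ ℝⁿ and let T ⊆ {1,…,n} with |T| = s be a set of s largest-in-absolute-value entries of z, i.e. |z_i| ≥ |z_j| for all i ∈ T and j ∉ T. Let z' be a minimizer of ‖w − z‖ over the set {w ∈ K : w_j = 0 for all j ∉ T}. Then ‖z' − z‖ ≤ ‖x* − z‖. -/

import Mathlib

open RealInnerProductSpace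

lemma aux_pair (a b c d : ℝ) (hd : d = 1 ∨ d = -1) (h : 0 ≤ d * a * c) (hbc : |b| ≤ |c|) :
    b^2 + (d*a - c)^2 ≤ (a - b)^2 + c^2 := by
  have hd2 : d^2 = 1 := by rcases hd with h|h <;> simp [h]
  have h1 : a * b ≤ d * a * c := by
    calc a*b ≤ |a*b| := le_abs_self _
    _ = |a| * |b| := abs_mul _ _
    _ ≤ |a| * |c| := mul_le_mul_of_nonneg_left hbc (abs_nonneg a)
    _ = |a*c| := (abs_mul _ _).symm
    _ = |d*a*c| := by rcases hd with h|h <;> simp [h, mul_assoc, abs_mul]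
    _ = d*a*c := abs_of_nonneg h
  nlinarith [hd2, h1]

lemma aux_single (a c d : ℝ) (hd : d = 1 ∨ d = -1) (h : 0 ≤ d * a * c) :
    (d*a - c)^2 ≤ (a - c)^2 := by
  linarith [aux_pair a c c d hd h le_rfl]

/-- greedy projection onto sparse vectors in a sign-flip- and
permutation-invariant set, Lemma `wpoVecImp`, sign-symmetric case: the restricted
projection `z'` onto the `s` largest-in-absolute-value entries of `z` is at least as close
to `z` as the `s`-sparse point `x* ∈ K`. -/
theorem stmt_14
    (n s : ℕ) (K : Set (EuclideanSpace ℝ (Fin n)))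
    (hKclosed : IsClosed K) (hKconv : Convex ℝ K)
    (hKperm : ∀ σ : Equiv.Perm (Fin n), ∀ x ∈ K, WithLp.toLp 2 (fun i => x (σ i)) ∈ K)
    (hKsign : ∀ ε : Fin n → ℝ, (∀ i, ε i = 1 ∨ ε i = -1) →
      ∀ x ∈ K, WithLp.toLp 2 (fun i => ε i * x i) ∈ K)
    (xs : EuclideanSpace ℝ (Fin n)) (hxs : xs ∈ K)
    (hnnz : Set.ncard {i | xs i ≠ 0} ≤ s)
    (z : EuclideanSpace ℝ (Fin n))
    (T : Finset (Fin n)) (hTcard : T.card = s)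
    (hTtop : ∀ i ∈ T, ∀ j ∉ T, |z j| ≤ |z i|)
    (z' : EuclideanSpace ℝ (Fin n))
    (hz'K : z' ∈ K) (hz'supp : ∀ j ∉ T, z' j = 0)
    (hz'min : ∀ w ∈ K, (∀ j ∉ T, w j = 0) → ‖z' - z‖ ≤ ‖w - z‖) :
    ‖z' - z‖ ≤ ‖xs - z‖ := by
  classical
  -- the support of xs as a finset
  set S : Finset (Fin n) := Finset.univ.filter (fun i => xs i ≠ 0) with hS
  have hSmem : ∀ i, i ∈ S ↔ xs i ≠ 0 := by intro i; simp [hS]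
  have hScard : S.card ≤ s := by
    have : {i | xs i ≠ 0} = ↑S := by ext i; simp [hS]
    rwa [this, Set.ncard_coe_finset] at hnnz
  set A : Finset (Fin n) := S \ T with hA
  have hcardle : A.card ≤ (T \ S).card := by
    have hST : S.card ≤ T.card := by rw [hTcard]; exact hScard
    have h1 := Finset.card_sdiff_add_card_inter S T
    have h2 := Finset.card_sdiff_add_card_inter T S
    rw [Finset.inter_comm] at h2
    rw [hA]
    omega
  obtain ⟨B, hBsub, hBcard⟩ := Finset.exists_subset_card_eq hcardle
  have e : (B : Finset (Fin n)) ≃ (A : Finset (Fin n)) :=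
    Finset.equivOfCardEq (by rw [hBcard])
  -- the swap function
  set f : Fin n → Fin n := fun i =>
    if h : i ∈ A then (e.symm ⟨i, h⟩ : Fin n) else if h : i ∈ B then (e ⟨i, h⟩ : Fin n) else i
    with hf
  have hAS : ∀ i ∈ A, i ∈ S ∧ i ∉ T := by intro i hi; rw [hA] at hi; exact Finset.mem_sdiff.mp hi
  have hBT : ∀ i ∈ B, i ∈ T ∧ i ∉ S := by
    intro i hi; exact Finset.mem_sdiff.mp (hBsub hi)
  have hdisj : ∀ i, i ∈ A → i ∈ B → False := by
    intro i hiA hiB; exact (hBT i hiB).2 (hAS i hiA).1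
  have hfA : ∀ i (h : i ∈ A), f i = (e.symm ⟨i, h⟩ : Fin n) := by
    intro i h; simp [hf, h]
  have hfB : ∀ i (h : i ∈ B), f i = (e ⟨i, h⟩ : Fin n) := by
    intro i h
    have hnA : i ∉ A := fun h' => hdisj i h' h
    simp [hf, hnA, h]
  have hfid : ∀ i, i ∉ A → i ∉ B → f i = i := by
    intro i h1 h2; simp [hf, h1, h2]
  have hinv : Function.Involutive f := by
    intro i
    by_cases hiA : i ∈ A
    · rw [hfA i hiA]
      have hmem : (e.symm ⟨i, hiA⟩ : Fin n) ∈ B := (e.symm ⟨i, hiA⟩).2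
      rw [hfB _ hmem]
      simp
    · by_cases hiB : i ∈ B
      · rw [hfB i hiB]
        have hmem : (e ⟨i, hiB⟩ : Fin n) ∈ A := (e ⟨i, hiB⟩).2
        rw [hfA _ hmem]
        simp
      · rw [hfid i hiA hiB, hfid i hiA hiB]
  set σ : Equiv.Perm (Fin n) := hinv.toPerm with hσ
  have hσf : ∀ i, σ i = f i := fun i => rfl
  -- sign flips
  set ε : Fin n → ℝ := fun i => if z i * xs (f i) < 0 then (-1 : ℝ) else 1 with hε
  have hεpm : ∀ i, ε i = 1 ∨ ε i = -1 := by
    intro i; rw [hε]; dsimp only; split <;> simp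
  have hεsign : ∀ i, 0 ≤ ε i * xs (f i) * z i := by
    intro i; rw [hε]; dsimp only
    split
    · next h => nlinarith
    · next h => push_neg at h; nlinarith
  -- the competitor
  set w : EuclideanSpace ℝ (Fin n) := WithLp.toLp 2 (fun i => ε i * xs (f i)) with hw
  have hwK : w ∈ K := by
    have h1 : WithLp.toLp 2 (fun i => xs (σ i)) ∈ K := hKperm σ xs hxs
    have h2 := hKsign ε hεpm _ h1
    exact h2
  have hxsB : ∀ i ∈ B, xs i = 0 := by
    intro i hi
    by_contra h
    exact (hBT i hi).2 ((hSmem i).mpr h)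
  have hwsupp : ∀ j ∉ T, w j = 0 := by
    intro j hj
    rw [hw]; dsimp only
    by_cases hjA : j ∈ A
    · rw [hfA j hjA]
      have : (e.symm ⟨j, hjA⟩ : Fin n) ∈ B := (e.symm ⟨j, hjA⟩).2
      rw [hxsB _ this, mul_zero]
    · have hjB : j ∉ B := fun h => hj (hBT j h).1
      rw [hfid j hjA hjB]
      have hjS : j ∉ S := by
        intro h
        exact hjA (Finset.mem_sdiff.mpr ⟨h, hj⟩)
      have : xs j = 0 := by
        by_contra h; exact hjS ((hSmem j).mpr h)
      rw [this, mul_zero]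
  refine le_trans (hz'min w hwK hwsupp) ?_
  -- now the norm comparison
  rw [EuclideanSpace.norm_eq, EuclideanSpace.norm_eq]
  apply Real.sqrt_le_sqrt
  have key : ∀ i, (w i - z i)^2 + (w (f i) - z (f i))^2
      ≤ (xs i - z i)^2 + (xs (f i) - z (f i))^2 := by
    intro i
    by_cases hiA : i ∈ A
    · -- i ∈ A : f i ∈ B
      have hfiB : f i ∈ B := by rw [hfA i hiA]; exact (e.symm ⟨i, hiA⟩).2
      have hffi : f (f i) = i := hinv i
      have hwi : w i = 0 := by rw [hw]; dsimp only; rw [hxsB _ hfiB, mul_zero]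
      have hwfi : w (f i) = ε (f i) * xs i := by rw [hw]; dsimp only; rw [hffi]
      have hsgn : 0 ≤ ε (f i) * xs i * z (f i) := by
        have := hεsign (f i); rwa [hffi] at this
      have habs : |z i| ≤ |z (f i)| :=
        hTtop (f i) (hBT _ hfiB).1 i (hAS i hiA).2
      have hxsfi : xs (f i) = 0 := hxsB _ hfiB
      rw [hwi, hwfi, hxsfi]
      have := aux_pair (xs i) (z i) (z (f i)) (ε (f i)) (hεpm (f i)) hsgn habs
      nlinarith [this]
    · by_cases hiB : i ∈ B
      · -- i ∈ B : f i ∈ A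
        have hfiA : f i ∈ A := by rw [hfB i hiB]; exact (e ⟨i, hiB⟩).2
        have hffi : f (f i) = i := hinv i
        have hwi : w i = ε i * xs (f i) := rfl
        have hwfi : w (f i) = 0 := by
          rw [hw]; dsimp only; rw [hffi, hxsB _ hiB, mul_zero]
        have hsgn : 0 ≤ ε i * xs (f i) * z i := hεsign i
        have habs : |z (f i)| ≤ |z i| :=
          hTtop i (hBT i hiB).1 (f i) (hAS _ hfiA).2
        have hxsi : xs i = 0 := hxsB _ hiB
        rw [hwi, hwfi, hxsi]
        have := aux_pair (xs (f i)) (z (f i)) (z i) (ε i) (hεpm i) hsgn habs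
        nlinarith [this]
      · -- fixed point
        have hfi : f i = i := hfid i hiA hiB
        have hwi : w i = ε i * xs i := by rw [hw]; dsimp only; rw [hfi]
        have hsgn : 0 ≤ ε i * xs i * z i := by
          have := hεsign i; rwa [hfi] at this
        rw [hfi, hwi]
        have := aux_single (xs i) (z i) (ε i) (hεpm i) hsgn
        nlinarith [this]
  have hsum : ∑ i, ((w i - z i)^2 + (w (f i) - z (f i))^2)
      ≤ ∑ i, ((xs i - z i)^2 + (xs (f i) - z (f i))^2) :=
    Finset.sum_le_sum (fun i _ => key i)
  have hreindexw : ∑ i, (w (f i) - z (f i))^2 = ∑ i, (w i - z i)^2 :=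
    Fintype.sum_equiv σ _ _ (fun x => rfl)
  have hreindexxs : ∑ i, (xs (f i) - z (f i))^2 = ∑ i, (xs i - z i)^2 :=
    Fintype.sum_equiv σ _ _ (fun x => rfl)
  rw [Finset.sum_add_distrib, Finset.sum_add_distrib, hreindexw, hreindexxs] at hsum
  have hcomp : ∀ (u : EuclideanSpace ℝ (Fin n)) i, ‖(u - z) i‖^2 = (u i - z i)^2 := by
    intro u i
    simp [Real.norm_eq_abs, sq_abs]
  simp only [hcomp]
  linarith
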